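/- For every polynomial p and every integer n ≥ 0, the identity (1 - t²) · (d/dt P_n(t)) = n · (P_{n-1}(t) - t · P_n(t)) holds for all real t, where P_n is the n-th Legendre polynomial (with the convention P_{-1} = 0 when n = 0). -/
import Mathlib


open Polynomial

private lemma iter_deriv_comm (j : ℕ) (q : Polynomial ℝ) :
    derivative^[j] (derivative q) = derivative (derivative^[j] q) := by
  rw [← Function.iterate_succ_apply, Function.iterate_succ_apply']

private lemma lem1 (k : ℕ) (p : Polynomial ℝ) :
    derivative^[k+1] (X * p)
      = X * derivative^[k+1] p + ((k : Polynomial ℝ) + 1) * derivative^[k] p := by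
  induction k with
  | zero => simp [derivative_mul]; ring
  | succ k ih =>
      rw [Function.iterate_succ_apply' derivative (k+1) (X*p), ih]
      rw [Function.iterate_succ_apply' derivative (k+1) p,
          Function.iterate_succ_apply' derivative k p]
      simp [derivative_mul, iter_deriv_comm]
      ring

private lemma lem2 (k : ℕ) (p : Polynomial ℝ) :
    derivative^[k+2] ((X^2 - 1) * p)
      = (X^2 - 1) * derivative^[k+2] p
        + (2*(k : Polynomial ℝ) + 4) * (X * derivative^[k+1] p)
        + (((k : Polynomial ℝ) + 2) * ((k : Polynomial ℝ) + 1)) * derivative^[k] p := by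
  induction k with
  | zero =>
      simp [derivative_mul, iter_deriv_comm, map_ofNat]
      ring
  | succ k ih =>
      rw [Function.iterate_succ_apply' derivative (k+2) ((X^2-1)*p), ih]
      rw [Function.iterate_succ_apply' derivative (k+2) p,
          Function.iterate_succ_apply' derivative (k+1) p]
      simp [derivative_mul, iter_deriv_comm, map_ofNat]
      ring

private lemma h0 (n : ℕ) :
    derivative ((X^2 - 1 : Polynomial ℝ)^(n+1))
      = (2*(n : Polynomial ℝ) + 2) * (X * (X^2 - 1)^n) := by
  rw [derivative_pow]
  simp [derivative_mul, map_ofNat]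
  push_cast
  ring

private lemma KL (m : ℕ) :
    (X^2 - 1) * derivative^[m+2] ((X^2 - 1 : Polynomial ℝ)^(m+1))
      = (((m : Polynomial ℝ) + 1) * ((m : Polynomial ℝ) + 2))
          * derivative^[m] ((X^2 - 1)^(m+1)) := by
  cases m with
  | zero =>
      simp [h0 0, derivative_mul, map_ofNat]
      ring
  | succ j =>
      have h1 : (X^2 - 1) * derivative ((X^2-1 : Polynomial ℝ)^(j+2))
          = C (2*(j:ℝ) + 4) * (X * (X^2 - 1)^(j+2)) := by
        rw [h0 (j+1)]
        simp [map_add, map_mul, map_ofNat]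
        push_cast
        ring
      have h2 := congrArg (derivative^[j+2]) h1
      rw [lem2 j (derivative ((X^2-1 : Polynomial ℝ)^(j+2))),
          Polynomial.iterate_derivative_C_mul, lem1 (j+1) ((X^2-1 : Polynomial ℝ)^(j+2))] at h2
      simp only [iter_deriv_comm, map_add, map_mul, map_ofNat, map_natCast] at h2
      show (X^2 - 1) * derivative^[(j+2)+1] ((X^2 - 1 : Polynomial ℝ)^(j+2)) = _
      rw [Function.iterate_succ_apply' derivative (j+2),
          Function.iterate_succ_apply' derivative (j+1),
          Function.iterate_succ_apply' derivative j] at *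
      push_cast at h2 ⊢
      linear_combination h2

private lemma h0C (n : ℕ) :
    derivative ((X^2 - 1 : Polynomial ℝ)^(n+1))
      = C (2*(n:ℝ) + 2) * (X * (X^2 - 1)^n) := by
  rw [h0 n]
  simp [map_add, map_mul, map_ofNat]

/-- The `n`-th Legendre polynomial via Rodrigues' formula. -/
noncomputable def legendre (n : ℕ) : Polynomial ℝ :=
  Polynomial.C (1 / (2 ^ n * n.factorial : ℝ)) * derivative^[n] ((X ^ 2 - 1) ^ n)

/-- `(1 - t²) Pₙ'(t) = n (P_{n-1}(t) - t Pₙ(t))` for all real `t` and `n ≥ 0`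
(for `n = 0` the right-hand side vanishes, so the convention `P_{-1} = 0` is harmless). -/
theorem legendre_deriv_identity (n : ℕ) (t : ℝ) :
    (1 - t ^ 2) * (derivative (legendre n)).eval t
      = (n : ℝ) * ((legendre (n - 1)).eval t - t * (legendre n).eval t) := by
  match n with
  | 0 => simp [legendre]
  | 1 =>
      simp [legendre, derivative_mul, map_ofNat]
      ring
  | (m+2) =>
      have hA := congrArg (derivative^[m+2]) (h0C (m+1))
      rw [Polynomial.iterate_derivative_C_mul, lem1 (m+1)] at hA
      have hA' := congrArg (derivative^[m+1]) (h0C (m+1))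
      rw [Polynomial.iterate_derivative_C_mul, lem1 m] at hA'
      have hKL := KL m
      have e1 := congrArg (Polynomial.eval t) hA
      have e2 := congrArg (Polynomial.eval t) hA'
      have e3 := congrArg (Polynomial.eval t) hKL
      rw [← Function.iterate_succ_apply] at e1 e2
      simp only [eval_mul, eval_add, eval_sub, eval_pow, eval_X, eval_one, eval_C,
        eval_natCast] at e1 e2 e3
      have hfac : (((m+2).factorial : ℝ)) = ((m:ℝ)+2) * ((m+1).factorial : ℝ) := by
        exact_mod_cast congrArg (Nat.cast (R := ℝ)) (Nat.factorial_succ (m+1))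
      have hc : (1 / (2^(m+1) * (m+1).factorial : ℝ))
          = 2*((m:ℝ)+2) * (1/(2^(m+2) * (m+2).factorial : ℝ)) := by
        rw [hfac]
        have h1 : ((m+1).factorial : ℝ) ≠ 0 := by positivity
        have h2 : (2:ℝ)^(m+1) ≠ 0 := by positivity
        have h3 : ((m:ℝ)+2) ≠ 0 := by positivity
        field_simp
        ring
      have hsub : m + 2 - 1 = m + 1 := rfl
      rw [hsub]
      push_cast
      simp only [legendre, derivative_mul, derivative_C, zero_mul, zero_add,
        ← Function.iterate_succ_apply' derivative, eval_mul, eval_C, hc]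
      simp only [Nat.succ_eq_add_one, show m+1+1 = m+2 from rfl, eval_ofNat] at e1 e2 e3
      push_cast at e1 e2 e3
      linear_combination ((1/(2^(m+2) * ((m+2).factorial:ℝ)))*(1-t^2))*e1
        + ((1/(2^(m+2) * ((m+2).factorial:ℝ)))*((m:ℝ)+2)*t)*e2
        - (2*(1/(2^(m+2) * ((m+2).factorial:ℝ)))*((m:ℝ)+2)*t)*e3
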